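/- Lebesgue decomposition for s-finite measures with an infinity part: given s-finite measures k and l on a standard Borel space Y, k decomposes as k = k_a + k_∞ + k_s where k_a ≪ l and every 0-∞ set of l is a 0-∞ set of k_a; k_∞ ≪ l, k_∞ is σ-finite, and k_∞ is supported on a 0-∞ set of l; and k_s ⟂ l. The three parts are mutually singular and the decomposition is unique. -/

import Mathlib

open MeasureTheory

/-- `U` is a 0-∞ set for `μ`: `U` is measurable and every measurable subset of `U` has
`μ`-measure `0` or `∞`. -/
def IsZeroInftySet {X : Type*} [MeasurableSpace X] (μ : Measure X) (U : Set X) : Prop :=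
  MeasurableSet U ∧ ∀ V, V ⊆ U → MeasurableSet V → μ V = 0 ∨ μ V = ⊤

/-- `(ka, ki, ks)` is a Lebesgue-type decomposition of `k` relative to `l`, with an
absolutely continuous part `ka` (0-∞-absolutely continuous w.r.t. `l`), an "infinity" part
`ki` (absolutely continuous, σ-finite and supported on a 0-∞ set of `l`) and a singular part
`ks`, the three parts being mutually singular. -/
def IsLebesgueInftyDecomp {Y : Type*} [MeasurableSpace Y]
    (k l ka ki ks : Measure Y) : Prop :=
  k = ka + ki + ks ∧
  (ka ≪ l ∧ ∀ U, IsZeroInftySet l U → IsZeroInftySet ka U) ∧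
  (ki ≪ l ∧ SigmaFinite ki ∧ ∃ U, IsZeroInftySet l U ∧ ki Uᶜ = 0) ∧
  ks ⟂ₘ l ∧
  ka ⟂ₘ ki ∧ ka ⟂ₘ ks ∧ ki ⟂ₘ ks

/-- A 0-∞ set of `μ` is `μ`-null on any part where `μ` restricts to a σ-finite measure. -/
lemma IsZeroInftySet.inter_null {Y : Type*} [MeasurableSpace Y] {μ : Measure Y} {U W : Set Y}
    (hU : MeasurableSet U)
    (h : ∀ V, V ⊆ U → MeasurableSet V → μ V = 0 ∨ μ V = ⊤)
    (hW : MeasurableSet W) [SigmaFinite (μ.restrict W)] :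
    μ (U ∩ W) = 0 := by
  have hcov : U ∩ W = ⋃ n, U ∩ W ∩ spanningSets (μ.restrict W) n := by
    rw [← Set.inter_iUnion, iUnion_spanningSets, Set.inter_univ]
  rw [hcov]
  refine measure_iUnion_null fun n => ?_
  have hmeas : MeasurableSet (U ∩ W ∩ spanningSets (μ.restrict W) n) :=
    (hU.inter hW).inter (measurableSet_spanningSets _ n)
  have hlt : μ (U ∩ W ∩ spanningSets (μ.restrict W) n) < ⊤ := by
    refine lt_of_le_of_lt ?_ (measure_spanningSets_lt_top (μ.restrict W) n)
    rw [Measure.restrict_apply' hW]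
    exact measure_mono fun x hx => ⟨hx.2, hx.1.2⟩
  rcases h _ (fun x hx => hx.1.1) hmeas with h0 | htop
  · exact h0
  · exact absurd htop hlt.ne

/-- If `μ (S ∩ Tᶜ) = 0` then `μ S = μ (S ∩ T)`. -/
lemma measure_eq_measure_inter_of_null {Y : Type*} [MeasurableSpace Y] {μ : Measure Y}
    {S T : Set Y} (h : μ (S ∩ Tᶜ) = 0) : μ S = μ (S ∩ T) := by
  refine le_antisymm ?_ (measure_mono Set.inter_subset_left)
  calc μ S = μ ((S ∩ T) ∪ (S ∩ Tᶜ)) := by rw [Set.inter_union_compl]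
    _ ≤ μ (S ∩ T) + μ (S ∩ Tᶜ) := measure_union_le _ _
    _ = μ (S ∩ T) := by rw [h, add_zero]

/-- Lebesgue decomposition for s-finite measures on a standard Borel space, with an infinity
part: the decomposition exists and is unique. -/
theorem lebesgue_decomposition_sfinite {Y : Type*} [MeasurableSpace Y] [StandardBorelSpace Y]
    (k l : Measure Y) [SFinite k] [SFinite l] :
    ∃ ka ki ks : Measure Y, IsLebesgueInftyDecomp k l ka ki ks ∧
      ∀ ka' ki' ks' : Measure Y, IsLebesgueInftyDecomp k l ka' ki' ks' →
        ka' = ka ∧ ki' = ki ∧ ks' = ks := by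
  obtain ⟨l', hl'fin, hll', hl'l⟩ := exists_isFiniteMeasure_absolutelyContinuous l
  haveI := hl'fin
  set m : Measure Y := l'.withDensity (k.rnDeriv l') with hm_def
  set ks : Measure Y := k.singularPart l' with hks_def
  have hk_add : k = m + ks := by
    rw [hm_def, hks_def, add_comm]; exact Measure.haveLebesgueDecomposition_add k l'
  have hm_ac : m ≪ l := (withDensity_absolutelyContinuous l' _).trans hl'l
  have hks_l : ks ⟂ₘ l :=
    (Measure.mutuallySingular_singularPart k l').mono_ac Measure.AbsolutelyContinuous.rfl hll'
  haveI : SFinite m := by rw [hm_def]; infer_instance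
  set W : Set Y := l.sigmaFiniteSet with hW_def
  set V : Set Y := m.sigmaFiniteSet with hV_def
  have hWm : MeasurableSet W := measurableSet_sigmaFiniteSet
  have hVm : MeasurableSet V := measurableSet_sigmaFiniteSet
  set E : Set Y := Wᶜ ∩ V with hE_def
  have hEm : MeasurableSet E := hWm.compl.inter hVm
  set ki : Measure Y := m.restrict E with hki_def
  set ka : Measure Y := m.restrict Eᶜ with hka_def
  -- Wᶜ is a 0-∞ set of l
  have hWc_zi : IsZeroInftySet l Wᶜ :=
    ⟨hWm.compl, fun V' hV' _ => measure_eq_zero_or_top_of_subset_compl_sigmaFiniteSet hV'⟩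
  have hka_ki : ka + ki = m := by
    rw [hka_def, hki_def, add_comm]; exact Measure.restrict_add_restrict_compl hEm
  -- key null fact: any 0-∞ set of l meets W in an l-null set
  have hl_null : ∀ U : Set Y, IsZeroInftySet l U → l (U ∩ W) = 0 := fun U hU =>
    IsZeroInftySet.inter_null hU.1 hU.2 hWm
  -- ka properties
  have hka_ac : ka ≪ l := (Measure.absolutelyContinuous_of_le Measure.restrict_le_self).trans hm_ac
  have hka_zi : ∀ U, IsZeroInftySet l U → IsZeroInftySet ka U := by
    intro U hU
    refine ⟨hU.1, fun V' hV'U hV'm => ?_⟩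
    have hV'zi : ∀ X, X ⊆ V' → MeasurableSet X → l X = 0 ∨ l X = ⊤ :=
      fun X hX hXm => hU.2 X (hX.trans hV'U) hXm
    have h1 : m (V' ∩ W) = 0 := hm_ac (IsZeroInftySet.inter_null hV'm hV'zi hWm)
    have hka_eq : ka V' = m (V' ∩ Vᶜ) := by
      rw [hka_def, Measure.restrict_apply hV'm]
      refine le_antisymm ?_ (measure_mono fun x hx => ⟨hx.1, fun hE => hx.2 hE.2⟩)
      have hsub : V' ∩ Eᶜ ⊆ (V' ∩ W) ∪ (V' ∩ Vᶜ) := by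
        intro x hx
        by_cases hxW : x ∈ W
        · exact Or.inl ⟨hx.1, hxW⟩
        · exact Or.inr ⟨hx.1, fun hxV => hx.2 ⟨hxW, hxV⟩⟩
      calc m (V' ∩ Eᶜ) ≤ m ((V' ∩ W) ∪ (V' ∩ Vᶜ)) := measure_mono hsub
        _ ≤ m (V' ∩ W) + m (V' ∩ Vᶜ) := measure_union_le _ _
        _ = m (V' ∩ Vᶜ) := by rw [h1, zero_add]
    rw [hka_eq]
    exact measure_eq_zero_or_top_of_subset_compl_sigmaFiniteSet Set.inter_subset_right
  -- ki properties
  have hki_ac : ki ≪ l := (Measure.absolutelyContinuous_of_le Measure.restrict_le_self).trans hm_ac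
  haveI hki_sf : SigmaFinite ki := by
    have : ki = (m.restrict V).restrict Wᶜ := by
      rw [hki_def, Measure.restrict_restrict hWm.compl]
    rw [this]; infer_instance
  have hki_supp : ki Wᶜᶜ = 0 := by
    rw [hki_def, Measure.restrict_apply hWm.compl.compl]
    have hemp : Wᶜᶜ ∩ E = ∅ := by
      ext x
      simp only [Set.mem_inter_iff, Set.mem_compl_iff, Set.mem_empty_iff_false, hE_def,
        iff_false, not_and, not_not]
      tauto
    rw [hemp, measure_empty]
  -- mutual singularities
  have hka_ki_ms : ka ⟂ₘ ki := by
    refine ⟨E, hEm, ?_, ?_⟩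
    · rw [hka_def, Measure.restrict_apply hEm]
      simp
    · rw [hki_def, Measure.restrict_apply hEm.compl]
      simp
  have hka_ks : ka ⟂ₘ ks :=
    hks_l.symm.mono_ac hka_ac Measure.AbsolutelyContinuous.rfl
  have hki_ks : ki ⟂ₘ ks :=
    hks_l.symm.mono_ac hki_ac Measure.AbsolutelyContinuous.rfl
  refine ⟨ka, ki, ks, ⟨by rw [hka_ki]; exact hk_add,
    ⟨hka_ac, hka_zi⟩, ⟨hki_ac, hki_sf, Wᶜ, hWc_zi, hki_supp⟩, hks_l, hka_ki_ms, hka_ks, hki_ks⟩,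
    ?_⟩
  -- Uniqueness
  rintro ka' ki' ks' ⟨hk'add, ⟨hka'_ac, hka'_zi⟩, ⟨hki'_ac, hki'_sf, U', hU'_zi, hki'U'⟩,
    hks'_l, hka'ki', _, _⟩
  obtain ⟨A, hAmeas, hksA, hlAc⟩ := hks_l
  obtain ⟨A', hA'meas, hks'A', hlA'c⟩ := hks'_l
  set B : Set Y := A ∩ A' with hB_def
  have hlBc : l Bᶜ = 0 := by
    rw [hB_def, Set.compl_inter]
    exact measure_union_null hlAc hlA'c
  -- step 1: m = ka' + ki' and ks' = ks
  have hm' : m = ka' + ki' := by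
    ext S hS
    have h1 : m S = m (S ∩ B) :=
      measure_eq_measure_inter_of_null (measure_mono_null Set.inter_subset_right (hm_ac hlBc))
    have h2 : (ka' + ki') S = (ka' + ki') (S ∩ B) := by
      refine measure_eq_measure_inter_of_null (measure_mono_null Set.inter_subset_right ?_)
      simp [Measure.add_apply, hka'_ac hlBc, hki'_ac hlBc]
    have h3 : m (S ∩ B) = k (S ∩ B) := by
      rw [hk_add, Measure.add_apply]
      have : ks (S ∩ B) = 0 :=
        measure_mono_null (fun x hx => hx.2.1) hksA
      rw [this, add_zero]
    have h4 : (ka' + ki') (S ∩ B) = k (S ∩ B) := by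
      rw [hk'add, Measure.add_apply]
      have h0 : ks' (S ∩ B) = 0 :=
        measure_mono_null (fun x hx => hx.2.2) hks'A'
      simp [Measure.add_apply, h0]
    rw [h1, h2, h3, h4]
  have hks'_eq : ks' = ks := by
    ext S hS
    have h1 : ks' S = ks' (S ∩ Bᶜ) :=
      measure_eq_measure_inter_of_null
        (measure_mono_null (fun x hx => (not_not.mp hx.2).2) hks'A')
    have h2 : ks S = ks (S ∩ Bᶜ) :=
      measure_eq_measure_inter_of_null
        (measure_mono_null (fun x hx => (not_not.mp hx.2).1) hksA)
    have hl0 : l (S ∩ Bᶜ) = 0 := measure_mono_null Set.inter_subset_right hlBc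
    have h3 : ks' (S ∩ Bᶜ) = k (S ∩ Bᶜ) := by
      rw [hk'add]
      simp [Measure.add_apply, hka'_ac hl0, hki'_ac hl0]
    have h4 : ks (S ∩ Bᶜ) = k (S ∩ Bᶜ) := by
      rw [hk_add]
      simp [Measure.add_apply, hm_ac hl0]
    rw [h1, h2, h3, h4]
  -- step 2: identify ka', ki' with restrictions of m
  obtain ⟨A₁, hA₁m, hka'A₁, hki'A₁c⟩ := hka'ki'
  have hki'_le : ∀ X : Set Y, ki' X ≤ m X := by
    intro X; rw [hm', Measure.add_apply]; exact le_add_self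
  have hka'_le : ∀ X : Set Y, ka' X ≤ m X := by
    intro X; rw [hm', Measure.add_apply]; exact le_self_add
  have hki'_eq : ki' = m.restrict A₁ := by
    ext S hS
    rw [Measure.restrict_apply hS]
    have h1 : ki' S = ki' (S ∩ A₁) :=
      measure_eq_measure_inter_of_null (measure_mono_null Set.inter_subset_right hki'A₁c)
    have h2 : m (S ∩ A₁) = ki' (S ∩ A₁) := by
      rw [hm', Measure.add_apply,
        measure_mono_null Set.inter_subset_right hka'A₁, zero_add]
    rw [h1, h2]
  have hka'_eq : ka' = m.restrict A₁ᶜ := by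
    ext S hS
    rw [Measure.restrict_apply hS]
    have h1 : ka' S = ka' (S ∩ A₁ᶜ) :=
      measure_eq_measure_inter_of_null
        (measure_mono_null (fun x hx => not_not.mp hx.2) hka'A₁)
    have h2 : m (S ∩ A₁ᶜ) = ka' (S ∩ A₁ᶜ) := by
      rw [hm', Measure.add_apply,
        measure_mono_null Set.inter_subset_right hki'A₁c, add_zero]
    rw [h1, h2]
  -- null computations : A₁ and E agree up to m-null sets
  have n1 : m (A₁ ∩ W) = 0 := by
    have hlWU' : l (U' ∩ W) = 0 := hl_null U' hU'_zi
    have hmWU' : m (U' ∩ W) = 0 := hm_ac hlWU'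
    have hki'1 : ki' (A₁ ∩ W) = 0 := by
      have hsub : A₁ ∩ W ⊆ (U' ∩ W) ∪ U'ᶜ := by
        intro x hx
        by_cases hxU : x ∈ U'
        · exact Or.inl ⟨hxU, hx.2⟩
        · exact Or.inr hxU
      refine measure_mono_null hsub (le_antisymm ?_ bot_le)
      calc ki' ((U' ∩ W) ∪ U'ᶜ) ≤ ki' (U' ∩ W) + ki' U'ᶜ := measure_union_le _ _
        _ ≤ m (U' ∩ W) + 0 := add_le_add (hki'_le _) hki'U'.le
        _ = 0 := by rw [hmWU', add_zero]
    have hka'1 : ka' (A₁ ∩ W) = 0 :=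
      measure_mono_null Set.inter_subset_left hka'A₁
    rw [hm', Measure.add_apply, hka'1, hki'1, add_zero]
  have n2 : m (A₁ ∩ Vᶜ) = 0 := by
    haveI := hki'_sf
    have hcov : A₁ ∩ Vᶜ = ⋃ n, A₁ ∩ Vᶜ ∩ spanningSets ki' n := by
      rw [← Set.inter_iUnion, iUnion_spanningSets, Set.inter_univ]
    rw [hcov]
    refine measure_iUnion_null fun n => ?_
    have hzt : m (A₁ ∩ Vᶜ ∩ spanningSets ki' n) = 0 ∨
        m (A₁ ∩ Vᶜ ∩ spanningSets ki' n) = ⊤ :=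
      measure_eq_zero_or_top_of_subset_compl_sigmaFiniteSet (fun x hx => hx.1.2)
    have hlt : m (A₁ ∩ Vᶜ ∩ spanningSets ki' n) < ⊤ := by
      rw [hm', Measure.add_apply,
        measure_mono_null (Set.inter_subset_left.trans Set.inter_subset_left) hka'A₁, zero_add]
      exact lt_of_le_of_lt (measure_mono Set.inter_subset_right)
        (measure_spanningSets_lt_top ki' n)
    rcases hzt with h0 | htop
    · exact h0
    · exact absurd htop hlt.ne
  have n3 : m (E ∩ A₁ᶜ) = 0 := by
    have hka'E : ka' (E ∩ A₁ᶜ) = 0 := by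
      have hzi : IsZeroInftySet ka' Wᶜ := hka'_zi Wᶜ hWc_zi
      have hcov : E ∩ A₁ᶜ = ⋃ n, E ∩ A₁ᶜ ∩ spanningSets (m.restrict V) n := by
        rw [← Set.inter_iUnion, iUnion_spanningSets, Set.inter_univ]
      rw [hcov]
      refine measure_iUnion_null fun n => ?_
      have hmeas : MeasurableSet (E ∩ A₁ᶜ ∩ spanningSets (m.restrict V) n) :=
        ((hEm.inter hA₁m.compl).inter (measurableSet_spanningSets _ n))
      have hzt := hzi.2 _ (fun x hx => hx.1.1.1) hmeas
      have hlt : ka' (E ∩ A₁ᶜ ∩ spanningSets (m.restrict V) n) < ⊤ := by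
        have hfin : m (spanningSets (m.restrict V) n ∩ V) < ⊤ := by
          rw [← Measure.restrict_apply' hVm]
          exact measure_spanningSets_lt_top _ n
        refine lt_of_le_of_lt ((hka'_le _).trans (measure_mono
          (fun x hx => Set.mem_inter hx.2 hx.1.1.2))) hfin
      rcases hzt with h0 | htop
      · exact h0
      · exact absurd htop hlt.ne
    have hki'E : ki' (E ∩ A₁ᶜ) = 0 :=
      measure_mono_null Set.inter_subset_right hki'A₁c
    rw [hm', Measure.add_apply, hka'E, hki'E, add_zero]
  have hae : A₁ =ᵐ[m] E := by
    rw [ae_eq_set]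
    constructor
    · have hsub : A₁ \ E ⊆ (A₁ ∩ W) ∪ (A₁ ∩ Vᶜ) := by
        intro x hx
        by_cases hxW : x ∈ W
        · exact Or.inl ⟨hx.1, hxW⟩
        · exact Or.inr ⟨hx.1, fun hxV => hx.2 ⟨hxW, hxV⟩⟩
      exact measure_mono_null hsub
        (le_antisymm ((measure_union_le _ _).trans (by rw [n1, n2, add_zero])) bot_le)
    · exact measure_mono_null (fun x hx => Set.mem_inter hx.1 hx.2) n3
  have haec : (A₁ᶜ : Set Y) =ᵐ[m] (Eᶜ : Set Y) := by
    rw [ae_eq_set]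
    constructor
    · refine measure_mono_null (fun x hx => ?_) n3
      exact ⟨not_not.mp hx.2, hx.1⟩
    · refine measure_mono_null ?_ (ae_eq_set.mp hae).1
      intro x hx
      exact ⟨not_not.mp hx.2, hx.1⟩
  refine ⟨?_, ?_, hks'_eq⟩
  · rw [hka'_eq, hka_def]
    exact Measure.restrict_congr_set haec
  · rw [hki'_eq, hki_def]
    exact Measure.restrict_congr_set hae
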